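/- Let H be a real Hilbert space, K ⊆ H nonempty closed convex, S a self-adjoint positive semidefinite contraction on H, λ ∈ (0,1), f ∈ H. Let u⋆ ∈ K be the unique minimizer over K of E(u) = -(1/2)⟪u, (S - I) u⟫ + (λ/2)⟪u - f, S (u - f)⟫. Then the iterates u_{n+1} = Π_K(S((1 - λ) u_n + λ f)), starting from any u₀ ∈ H, satisfy ‖u_n - u⋆‖ ≤ (1 - λ)ⁿ ‖u₀ - u⋆‖, and hence u_n → u⋆ strongly in H. -/

import Mathlib

open RealInnerProductSpace

theorem stmt_9 {H : Type*} [NormedAddCommGroup H] [InnerProductSpace ℝ H] [CompleteSpace H]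
    (S : H →L[ℝ] H)
    (hsa : ∀ u v : H, ⟪S u, v⟫ = ⟪u, S v⟫)
    (hpos : ∀ u : H, 0 ≤ ⟪S u, u⟫)
    (hcontr : ∀ u : H, ‖S u‖ ≤ ‖u‖)
    (l : ℝ) (hl0 : 0 < l) (hl1 : l < 1) (f : H)
    (E : H → ℝ)
    (hE : ∀ u : H, E u = -(1/2) * ⟪u, S u - u⟫ + (l/2) * ⟪u - f, S (u - f)⟫)
    (K : Set H) (hK : K.Nonempty) (hKc : IsClosed K) (hKv : Convex ℝ K)
    (proj : H → H)
    (hproj : ∀ x : H, proj x ∈ K ∧ ∀ y ∈ K, ‖proj x - x‖ ≤ ‖y - x‖)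
    (ustar : H) (hmem : ustar ∈ K)
    (hmin : ∀ v ∈ K, E ustar ≤ E v)
    (huniq : ∀ w ∈ K, (∀ v ∈ K, E w ≤ E v) → w = ustar)
    (u : ℕ → H)
    (hrec : ∀ n, u (n+1) = proj (S ((1 - l) • u n + l • f))) :
    (∀ n, ‖u n - ustar‖ ≤ (1 - l)^n * ‖u 0 - ustar‖) ∧
    Filter.Tendsto u Filter.atTop (nhds ustar) := by
  -- variational characterization of proj
  have hvar : ∀ x : H, ∀ y ∈ K, ⟪x - proj x, y - proj x⟫ ≤ 0 := by
    intro x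
    haveI : Nonempty K := hK.to_subtype
    have heq : ‖x - proj x‖ = ⨅ w : K, ‖x - w‖ := by
      refine le_antisymm (le_ciInf ?_) (ciInf_le (f := fun w : K => ‖x - (w : H)‖) ⟨0, fun _ ⟨_, h⟩ => h ▸ norm_nonneg _⟩
        ⟨proj x, (hproj x).1⟩)
      rintro ⟨y, hy⟩
      rw [norm_sub_rev]
      calc ‖proj x - x‖ ≤ ‖y - x‖ := (hproj x).2 y hy
        _ = ‖x - y‖ := norm_sub_rev _ _
    exact (norm_eq_iInf_iff_real_inner_le_zero hKv (hproj x).1).mp heq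
  -- nonexpansiveness
  have hne : ∀ a b : H, ‖proj a - proj b‖ ≤ ‖a - b‖ := by
    intro a b
    have h1 := hvar a (proj b) (hproj b).1
    have h2 := hvar b (proj a) (hproj a).1
    have key : ‖proj a - proj b‖ ^ 2 ≤ ⟪a - b, proj a - proj b⟫ := by
      have e1 : ⟪a - proj a, proj b - proj a⟫ + ⟪b - proj b, proj a - proj b⟫
          = ⟪a - b, proj b - proj a⟫ + ‖proj a - proj b‖ ^ 2 := by
        simp only [inner_sub_left, inner_sub_right, ← real_inner_self_eq_norm_sq]
        linarith [real_inner_comm (proj a) (proj b), real_inner_comm a (proj a),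
          real_inner_comm b (proj b), real_inner_comm a (proj b),
          real_inner_comm b (proj a), real_inner_comm a b]
      have e2 : ⟪a - b, proj b - proj a⟫ = -⟪a - b, proj a - proj b⟫ := by
        rw [← inner_neg_right]; congr 1; abel
      linarith
    have hcs := real_inner_le_norm (a - b) (proj a - proj b)
    nlinarith [norm_nonneg (proj a - proj b), norm_nonneg (a - b)]
  -- ustar is a fixed point
  set g : H := S ((1 - l) • ustar + l • f) with hg
  have hfix : ustar = proj g := by
    -- variational inequality for ustar from minimality
    have hvi : ∀ v ∈ K, ⟪g - ustar, v - ustar⟫ ≤ 0 := by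
      intro v hv
      set w : H := v - ustar with hw
      set D : ℝ := ⟪ustar - g, w⟫ with hD
      set Q : ℝ := (1/2) * ‖w‖^2 - ((1-l)/2) * ⟪w, S w⟫ with hQ
      have hkey : ∀ t : ℝ, E (ustar + t • w) = E ustar + t * D + t^2 * Q := by
        intro t
        simp only [hE, hD, hQ, hg]
        simp only [inner_sub_left, inner_sub_right, inner_add_left, inner_add_right,
          real_inner_smul_left, real_inner_smul_right, map_add, map_smul, map_sub,
          ← real_inner_self_eq_norm_sq]
        have c1 : ⟪w, S ustar⟫ = ⟪ustar, S w⟫ := by rw [← hsa, real_inner_comm]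
        have c2 : ⟪w, S f⟫ = ⟪f, S w⟫ := by rw [← hsa, real_inner_comm]
        have c3 : ⟪f, S ustar⟫ = ⟪ustar, S f⟫ := by rw [← hsa, real_inner_comm]
        have c4 : ⟪w, ustar⟫ = ⟪ustar, w⟫ := real_inner_comm _ _
        simp only [hsa ustar w, hsa f w, hsa w w, c1, c2, c3, c4]
        ring
      -- from minimality: 0 ≤ t*D + t^2*Q for t ∈ (0,1]
      have hDQ : ∀ t : ℝ, 0 < t → t ≤ 1 → 0 ≤ D + t * Q := by
        intro t ht0 ht1
        have hmemt : ustar + t • w ∈ K := by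
          have := hKv hmem hv (by linarith : (0:ℝ) ≤ 1 - t) (le_of_lt ht0) (by ring)
          convert this using 1
          rw [hw]; module
        have := hmin _ hmemt
        rw [hkey t] at this
        nlinarith
      have hD0 : 0 ≤ D := by
        by_contra hneg
        push_neg at hneg
        rcases le_or_gt Q 0 with hQ0 | hQ0
        · linarith [hDQ 1 one_pos le_rfl]
        · have ht := hDQ (min 1 (-D / (2*Q)))
            (lt_min one_pos (div_pos (by linarith) (by linarith))) (min_le_left _ _)
          have h1 : min 1 (-D / (2*Q)) * Q ≤ (-D / (2*Q)) * Q :=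
            mul_le_mul_of_nonneg_right (min_le_right _ _) (le_of_lt hQ0)
          have h2 : (-D / (2*Q)) * Q = -D / 2 := by field_simp
          linarith
      rw [← neg_nonneg]
      have : -⟪g - ustar, v - ustar⟫ = D := by
        rw [hD, hw, ← inner_neg_left]; congr 1; abel
      linarith [hD0, this.ge]
    -- both ustar and proj g satisfy the variational inequality ⇒ equal
    have h1 := hvar g ustar hmem
    have h2 := hvi (proj g) (hproj g).1
    have : ‖ustar - proj g‖ ^ 2 ≤ 0 := by
      have e1 : ⟪g - proj g, ustar - proj g⟫ + ⟪g - ustar, proj g - ustar⟫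
          = ‖ustar - proj g‖ ^ 2 := by
        simp only [inner_sub_left, inner_sub_right, ← real_inner_self_eq_norm_sq]
        linarith [real_inner_comm g (proj g), real_inner_comm g ustar,
          real_inner_comm ustar (proj g)]
      linarith
    have := norm_nonneg (ustar - proj g)
    have hz : ‖ustar - proj g‖ = 0 := by nlinarith
    rw [norm_eq_zero, sub_eq_zero] at hz
    exact hz
  -- contraction estimate
  have hstep : ∀ n, ‖u (n+1) - ustar‖ ≤ (1 - l) * ‖u n - ustar‖ := by
    intro n
    rw [hrec n]
    calc ‖proj (S ((1 - l) • u n + l • f)) - ustar‖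
        = ‖proj (S ((1 - l) • u n + l • f)) - proj g‖ := by rw [← hfix]
      _ ≤ ‖S ((1 - l) • u n + l • f) - g‖ := hne _ _
      _ = ‖S ((1 - l) • (u n - ustar))‖ := by
          have heq2 : (1 - l) • u n + l • f - ((1 - l) • ustar + l • f)
              = (1 - l) • (u n - ustar) := by module
          rw [hg, ← map_sub, heq2]
      _ ≤ ‖(1 - l) • (u n - ustar)‖ := hcontr _
      _ = (1 - l) * ‖u n - ustar‖ := by
          rw [norm_smul, Real.norm_eq_abs, abs_of_nonneg (by linarith)]
  have hbound : ∀ n, ‖u n - ustar‖ ≤ (1 - l)^n * ‖u 0 - ustar‖ := by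
    intro n
    induction n with
    | zero => simp
    | succ n ih =>
      calc ‖u (n+1) - ustar‖ ≤ (1 - l) * ‖u n - ustar‖ := hstep n
        _ ≤ (1 - l) * ((1 - l)^n * ‖u 0 - ustar‖) :=
            mul_le_mul_of_nonneg_left ih (by linarith)
        _ = (1 - l)^(n+1) * ‖u 0 - ustar‖ := by ring
  refine ⟨hbound, ?_⟩
  rw [tendsto_iff_norm_sub_tendsto_zero]
  have hlim : Filter.Tendsto (fun n => (1 - l)^n * ‖u 0 - ustar‖) Filter.atTop (nhds 0) := by
    have := tendsto_pow_atTop_nhds_zero_of_lt_one (by linarith : (0:ℝ) ≤ 1 - l) (by linarith)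
    simpa using this.mul_const ‖u 0 - ustar‖
  exact squeeze_zero (fun n => norm_nonneg _) hbound hlim
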